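/- The double arrow space D, i.e. the set (Set.Icc (0:ℝ) 1) × Bool equipped with the lexicographic linear order (where false < true) and its order topology, is a compact Hausdorff space that is first-countable and separable. -/

import Mathlib

/-- The double arrow space: `[0,1] × Bool` with the lexicographic order topology. -/
abbrev DoubleArrow : Type := Lex (Set.Icc (0:ℝ) 1 × Bool)

noncomputable instance : TopologicalSpace DoubleArrow := Preorder.topology DoubleArrow

instance : OrderTopology DoubleArrow := ⟨rfl⟩

open Set Filter Topology

namespace DoubleArrowAux


instance : Fact ((0:ℝ) ≤ 1) := ⟨zero_le_one⟩

open Classical in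
noncomputable def dsup (S : Set DoubleArrow) : DoubleArrow :=
  if toLex (sSup ((fun p => (ofLex p).1) '' S), true) ∈ S then
    toLex (sSup ((fun p => (ofLex p).1) '' S), true)
  else toLex (sSup ((fun p => (ofLex p).1) '' S), false)

theorem isLUB_dsup (S : Set DoubleArrow) : IsLUB S (dsup S) := by
  classical
  set t := sSup ((fun p => (ofLex p).1) '' S) with ht
  have hub : ∀ p ∈ S, (ofLex p).1 ≤ t := fun p hp => le_sSup ⟨p, hp, rfl⟩
  constructor
  · intro p hp
    show p ≤ dsup S
    unfold dsup
    rw [← ht]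
    split_ifs with h
    · refine (Prod.Lex.toLex_le_toLex (x := (ofLex p)) (y := (t, true))).2 ?_
      rcases (hub p hp).lt_or_eq with h' | h'
      · exact Or.inl h'
      · exact Or.inr ⟨h', Bool.le_true _⟩
    · refine (Prod.Lex.toLex_le_toLex (x := (ofLex p)) (y := (t, false))).2 ?_
      rcases (hub p hp).lt_or_eq with h' | h'
      · exact Or.inl h'
      · refine Or.inr ⟨h', ?_⟩
        cases hb : (ofLex p).2
        · exact le_refl _
        · exact absurd (show toLex (t, true) ∈ S by
            have : ofLex p = (t, true) := Prod.ext h' hb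
            rw [← this]; exact hp) h
  · intro u hu
    have hts : t ≤ (ofLex u).1 := by
      refine sSup_le ?_
      rintro r ⟨p, hp, rfl⟩
      rcases (Prod.Lex.toLex_le_toLex (x := (ofLex p)) (y := (ofLex u))).1 (hu hp) with h | ⟨h, _⟩
      · exact h.le
      · exact h.le
    show dsup S ≤ u
    unfold dsup
    rw [← ht]
    split_ifs with h
    · exact hu h
    · refine (Prod.Lex.toLex_le_toLex (x := (t, false)) (y := (ofLex u))).2 ?_
      rcases hts.lt_or_eq with h' | h'
      · exact Or.inl h'
      · exact Or.inr ⟨h', Bool.false_le _⟩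

noncomputable instance : SupSet DoubleArrow := ⟨dsup⟩

noncomputable instance : CompleteLattice DoubleArrow :=
  { (inferInstance : Lattice DoubleArrow), (inferInstance : BoundedOrder DoubleArrow),
    completeLatticeOfSup DoubleArrow isLUB_dsup with }

noncomputable instance : CompleteLinearOrder DoubleArrow :=
  { (inferInstance : CompleteLattice DoubleArrow), Prod.Lex.instLinearOrder _ _,
    LinearOrder.toBiheytingAlgebra _ with }



theorem covby (τ : Set.Icc (0:ℝ) 1) :
    (toLex (τ, false) : DoubleArrow) ⋖ toLex (τ, true) := by
  constructor
  · exact (Prod.Lex.toLex_lt_toLex (x := _) (y := _)).2 (Or.inr ⟨rfl, Bool.false_lt_true⟩)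
  · intro c h1 h2
    rcases (Prod.Lex.toLex_lt_toLex (x := (τ, false)) (y := (ofLex c))).1 h1 with h | ⟨h, hb⟩
    · rcases (Prod.Lex.toLex_lt_toLex (x := (ofLex c)) (y := (τ, true))).1 h2 with h' | ⟨h', _⟩
      · exact absurd (h.trans h') (lt_irrefl _)
      · rw [h'] at h; exact absurd h (lt_irrefl _)
    · rcases (Prod.Lex.toLex_lt_toLex (x := (ofLex c)) (y := (τ, true))).1 h2 with h' | ⟨h', hb'⟩
      · rw [h] at h'; exact absurd h' (lt_irrefl _)
      · rcases Bool.lt_iff.1 hb with ⟨_, hc⟩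
        rw [hc] at hb'
        exact absurd hb' (by simp)

noncomputable def useq (τ : Set.Icc (0:ℝ) 1) (n : ℕ) : DoubleArrow :=
  toLex (projIcc 0 1 zero_le_one ((τ:ℝ) + 1/(n+1)), false)

theorem lt_useq {τ : Set.Icc (0:ℝ) 1} (hτ : (τ:ℝ) < 1) (n : ℕ) :
    (toLex (τ, true) : DoubleArrow) < useq τ n := by
  refine (Prod.Lex.toLex_lt_toLex (x := _) (y := _)).2 (Or.inl ?_)
  rw [← Subtype.coe_lt_coe, Set.coe_projIcc]
  have h1 : (0:ℝ) < 1/(n+1) := by positivity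
  exact lt_max_of_lt_right (lt_min hτ (by linarith))

theorem useq_cof {τ : Set.Icc (0:ℝ) 1} {y : DoubleArrow}
    (hy : (toLex (τ, true) : DoubleArrow) < y) : ∃ n, useq τ n ≤ y := by
  have h1 : τ < (ofLex y).1 := by
    rcases (Prod.Lex.toLex_lt_toLex (x := (τ, true)) (y := (ofLex y))).1 hy with h | ⟨_, hb⟩
    · exact h
    · exact absurd hb (by simp)
  have h2 : (τ:ℝ) < ((ofLex y).1 : ℝ) := h1
  obtain ⟨n, hn⟩ := exists_nat_one_div_lt (sub_pos.2 h2)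
  refine ⟨n, (Prod.Lex.toLex_le_toLex (x := _) (y := _)).2 (Or.inl ?_)⟩
  rw [← Subtype.coe_lt_coe, Set.coe_projIcc]
  have h0 : (0:ℝ) ≤ (τ:ℝ) := τ.2.1
  have h2' : (τ:ℝ) < (↑y.1 : ℝ) := h2
  have hn' : 1/((n:ℝ)+1) < (↑y.1 : ℝ) - (τ:ℝ) := hn
  exact max_lt (by linarith) (lt_of_le_of_lt (min_le_right _ _) (by linarith))

theorem isCG_right {τ : Set.Icc (0:ℝ) 1} (hτ : (τ:ℝ) < 1) :
    (𝓝[≥] (toLex (τ, true) : DoubleArrow)).IsCountablyGenerated := by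
  have hb := (nhdsGE_basis_of_exists_gt ⟨useq τ 0, lt_useq hτ 0⟩).to_hasBasis
    (fun y hy => (useq_cof hy).imp fun n hn => ⟨trivial, Ico_subset_Ico_right hn⟩)
    (fun n _ => ⟨useq τ n, lt_useq hτ n, subset_rfl⟩)
  exact hb.isCountablyGenerated

noncomputable def lseq (τ : Set.Icc (0:ℝ) 1) (n : ℕ) : DoubleArrow :=
  toLex (projIcc 0 1 zero_le_one ((τ:ℝ) - 1/(n+1)), true)

theorem lseq_lt {τ : Set.Icc (0:ℝ) 1} (hτ : (0:ℝ) < τ) (n : ℕ) :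
    lseq τ n < (toLex (τ, false) : DoubleArrow) := by
  refine (Prod.Lex.toLex_lt_toLex (x := _) (y := _)).2 (Or.inl ?_)
  rw [← Subtype.coe_lt_coe, Set.coe_projIcc]
  have h1 : (0:ℝ) < 1/(n+1) := by positivity
  exact max_lt hτ (lt_of_le_of_lt (min_le_right _ _) (by linarith))

theorem lseq_cof {τ : Set.Icc (0:ℝ) 1} {y : DoubleArrow}
    (hy : y < (toLex (τ, false) : DoubleArrow)) : ∃ n, y ≤ lseq τ n := by
  have h1 : (ofLex y).1 < τ := by
    rcases (Prod.Lex.toLex_lt_toLex (x := (ofLex y)) (y := (τ, false))).1 hy with h | ⟨_, hb⟩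
    · exact h
    · exact absurd hb (by simp)
  have h2 : ((ofLex y).1 : ℝ) < (τ:ℝ) := h1
  obtain ⟨n, hn⟩ := exists_nat_one_div_lt (sub_pos.2 h2)
  refine ⟨n, (Prod.Lex.toLex_le_toLex (x := _) (y := _)).2 (Or.inl ?_)⟩
  rw [← Subtype.coe_lt_coe, Set.coe_projIcc]
  have ht1 : (τ:ℝ) ≤ 1 := τ.2.2
  have hpos : (0:ℝ) < 1/(n+1) := by positivity
  have h2' : (↑y.1 : ℝ) < (τ:ℝ) := h2
  have hn' : 1/((n:ℝ)+1) < (τ:ℝ) - (↑y.1 : ℝ) := hn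
  have hmin : min 1 ((τ:ℝ) - 1/(n+1)) = (τ:ℝ) - 1/(n+1) := min_eq_right (by linarith)
  rw [hmin]
  exact lt_max_of_lt_right (by linarith)

theorem isCG_left {τ : Set.Icc (0:ℝ) 1} (hτ : (0:ℝ) < τ) :
    (𝓝[≤] (toLex (τ, false) : DoubleArrow)).IsCountablyGenerated := by
  have hb := (nhdsLE_basis_of_exists_lt ⟨lseq τ 0, lseq_lt hτ 0⟩).to_hasBasis
    (fun y hy => (lseq_cof hy).imp fun n hn => ⟨trivial, Ioc_subset_Ioc_left hn⟩)
    (fun n _ => ⟨lseq τ n, lseq_lt hτ n, subset_rfl⟩)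
  exact hb.isCountablyGenerated

theorem Ici_top {τ : Set.Icc (0:ℝ) 1} (hτ : (τ:ℝ) = 1) :
    Ici (toLex (τ, true) : DoubleArrow) = {toLex (τ, true)} := by
  ext y
  simp only [mem_Ici, mem_singleton_iff]
  constructor
  · intro h
    refine le_antisymm ?_ h
    refine (Prod.Lex.toLex_le_toLex (x := (ofLex y)) (y := (τ, true))).2 ?_
    rcases lt_or_eq_of_le (show ((ofLex y).1:ℝ) ≤ (τ:ℝ) by rw [hτ]; exact (ofLex y).1.2.2)
      with h' | h'
    · exact Or.inl (Subtype.coe_lt_coe.1 h')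
    · exact Or.inr ⟨Subtype.ext h', Bool.le_true _⟩
  · intro h; rw [h]

theorem Iic_bot {τ : Set.Icc (0:ℝ) 1} (hτ : (τ:ℝ) = 0) :
    Iic (toLex (τ, false) : DoubleArrow) = {toLex (τ, false)} := by
  ext y
  simp only [mem_Iic, mem_singleton_iff]
  constructor
  · intro h
    refine le_antisymm h ?_
    refine (Prod.Lex.toLex_le_toLex (x := (τ, false)) (y := (ofLex y))).2 ?_
    rcases lt_or_eq_of_le (show (τ:ℝ) ≤ ((ofLex y).1:ℝ) by rw [hτ]; exact (ofLex y).1.2.1)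
      with h' | h'
    · exact Or.inl (Subtype.coe_lt_coe.1 h')
    · exact Or.inr ⟨Subtype.ext h', Bool.false_le _⟩
  · intro h; rw [h]

instance : FirstCountableTopology DoubleArrow := by
  constructor
  intro x
  rcases hx : ofLex x with ⟨τ, b⟩
  have hx' : x = toLex (τ, b) := by rw [← hx]; rfl
  rw [hx']
  cases b
  · -- b = false
    rw [← nhdsLE_sup_nhdsGT (toLex (τ, false)), (covby τ).nhdsGT, sup_bot_eq]
    rcases lt_or_eq_of_le (show (0:ℝ) ≤ (τ:ℝ) from τ.2.1) with h1 | h1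
    · exact isCG_left h1
    · rw [show 𝓝[≤] (toLex (τ, false) : DoubleArrow) = 𝓝[Iic (toLex (τ, false))] _ from rfl,
        Iic_bot h1.symm, nhdsWithin_singleton]
      exact isCountablyGenerated_pure _
  · -- b = true
    rw [← nhdsLT_sup_nhdsGE (toLex (τ, true)), (covby τ).nhdsLT, bot_sup_eq]
    rcases lt_or_eq_of_le (show (τ:ℝ) ≤ 1 from τ.2.2) with h1 | h1
    · exact isCG_right h1
    · rw [show 𝓝[≥] (toLex (τ, true) : DoubleArrow) = 𝓝[Ici (toLex (τ, true))] _ from rfl,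
        Ici_top h1, nhdsWithin_singleton]
      exact isCountablyGenerated_pure _

noncomputable def ratPt (qb : ℚ × Bool) : DoubleArrow :=
  toLex (projIcc 0 1 zero_le_one ((qb.1:ℝ)), qb.2)

theorem separable : TopologicalSpace.SeparableSpace DoubleArrow := by
  refine ⟨⟨Set.range ratPt, Set.countable_range _, ?_⟩⟩
  intro x
  rw [mem_closure_iff_nhds]
  intro U hU
  rcases hx : ofLex x with ⟨τ, b⟩
  have hx' : x = toLex (τ, b) := by rw [← hx]; rfl
  cases b
  · -- b = false
    rcases lt_or_eq_of_le (show (0:ℝ) ≤ (τ:ℝ) from τ.2.1) with h1 | h1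
    · have hU' : U ∈ 𝓝[≤] x := nhdsWithin_le_nhds hU
      rw [hx'] at hU'
      obtain ⟨l, hlx, hsub⟩ := (nhdsLE_basis_of_exists_lt ⟨lseq τ 0, lseq_lt h1 0⟩).mem_iff.1 hU'
      have hfl : ((ofLex l).1 : ℝ) < (τ:ℝ) := by
        rcases (Prod.Lex.toLex_lt_toLex (x := (ofLex l)) (y := (τ, false))).1 hlx with h | ⟨_, hb⟩
        · exact h
        · exact absurd hb (by simp)
      obtain ⟨q, hq1, hq2⟩ := exists_rat_btwn hfl
      have hqm : (q:ℝ) ∈ Icc (0:ℝ) 1 := ⟨le_of_lt (lt_of_le_of_lt (ofLex l).1.2.1 hq1),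
        le_trans hq2.le τ.2.2⟩
      refine ⟨toLex (⟨(q:ℝ), hqm⟩, true), hsub ⟨?_, ?_⟩, ⟨(q, true), ?_⟩⟩
      · exact (Prod.Lex.toLex_lt_toLex (x := (ofLex l)) (y := (⟨(q:ℝ), hqm⟩, true))).2 (Or.inl hq1)
      · refine (Prod.Lex.toLex_le_toLex (x := (⟨(q:ℝ), hqm⟩, true)) (y := (τ, false))).2 (Or.inl hq2)
      · show toLex (projIcc 0 1 zero_le_one ((q:ℝ)), true) = _
        rw [projIcc_of_mem zero_le_one hqm]
    · -- τ = 0 : x is the bottom point, itself rational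
      refine ⟨x, mem_of_mem_nhds hU, ⟨((0:ℚ), false), ?_⟩⟩
      show toLex (projIcc 0 1 zero_le_one (((0:ℚ):ℝ)), false) = x
      rw [hx']
      have : projIcc 0 1 zero_le_one (((0:ℚ):ℝ)) = τ := by
        apply Subtype.ext
        rw [show (((0:ℚ):ℝ)) = (0:ℝ) by norm_num,
          projIcc_of_mem zero_le_one (left_mem_Icc.2 zero_le_one)]
        exact h1
      rw [this]
  · -- b = true
    rcases lt_or_eq_of_le (show (τ:ℝ) ≤ 1 from τ.2.2) with h1 | h1
    · have hU' : U ∈ 𝓝[≥] x := nhdsWithin_le_nhds hU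
      rw [hx'] at hU'
      obtain ⟨u, hxu, hsub⟩ := (nhdsGE_basis_of_exists_gt ⟨useq τ 0, lt_useq h1 0⟩).mem_iff.1 hU'
      have hfu : (τ:ℝ) < ((ofLex u).1 : ℝ) := by
        rcases (Prod.Lex.toLex_lt_toLex (x := (τ, true)) (y := (ofLex u))).1 hxu with h | ⟨_, hb⟩
        · exact h
        · exact absurd hb (by simp)
      obtain ⟨q, hq1, hq2⟩ := exists_rat_btwn hfu
      have hqm : (q:ℝ) ∈ Icc (0:ℝ) 1 := ⟨le_of_lt (lt_of_le_of_lt τ.2.1 hq1),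
        le_trans hq2.le (ofLex u).1.2.2⟩
      refine ⟨toLex (⟨(q:ℝ), hqm⟩, false), hsub ⟨?_, ?_⟩, ⟨(q, false), ?_⟩⟩
      · exact le_of_lt ((Prod.Lex.toLex_lt_toLex (x := (τ, true)) (y := (⟨(q:ℝ), hqm⟩, false))).2 (Or.inl hq1))
      · exact (Prod.Lex.toLex_lt_toLex (x := (⟨(q:ℝ), hqm⟩, false)) (y := (ofLex u))).2 (Or.inl hq2)
      · show toLex (projIcc 0 1 zero_le_one ((q:ℝ)), false) = _
        rw [projIcc_of_mem zero_le_one hqm]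
    · -- τ = 1 : x is the top point, itself rational
      refine ⟨x, mem_of_mem_nhds hU, ⟨((1:ℚ), true), ?_⟩⟩
      show toLex (projIcc 0 1 zero_le_one (((1:ℚ):ℝ)), true) = x
      rw [hx']
      have : projIcc 0 1 zero_le_one (((1:ℚ):ℝ)) = τ := by
        apply Subtype.ext
        rw [show (((1:ℚ):ℝ)) = (1:ℝ) by norm_num,
          projIcc_of_mem zero_le_one (right_mem_Icc.2 zero_le_one)]
        exact h1.symm
      rw [this]

end DoubleArrowAux

/-- The double arrow space is compact, Hausdorff, first-countable and separable. -/
theorem stmt_15 :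
    CompactSpace DoubleArrow ∧ T2Space DoubleArrow ∧
      FirstCountableTopology DoubleArrow ∧
      TopologicalSpace.SeparableSpace DoubleArrow := by
  exact ⟨inferInstance, inferInstance, inferInstance, DoubleArrowAux.separable⟩
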